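/- Let P be a probability distribution on a finite set S, let x ∈ S with P(x) ≤ 1/2, let ζ > 0, and let G be the number of i.i.d. draws from P until x appears. Then log₂ E[G^ζ] ≥ -ζ log₂ P(x) - log₂(e² 2^ζ). -/

import Mathlib

/-- Let `p` be a probability distribution on a finite set `S`, `x ∈ S` with
`0 < p x ≤ 1/2`, and let `G` be the number of i.i.d. draws from `p` until `x`
appears, so that `E[G^ζ] = ∑_{k=1}^∞ k^ζ (1 - p x)^{k-1} (p x)`.  Then
`log₂ E[G^ζ] ≥ -ζ log₂ p(x) - log₂(e² 2^ζ)`. -/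
theorem log_guessing_moment_lower_bound {S : Type*} [Fintype S]
    (p : S → ℝ) (hp0 : ∀ s, 0 ≤ p s) (hp1 : ∑ s, p s = 1)
    (x : S) (hx0 : 0 < p x) (hx : p x ≤ 1 / 2) (ζ : ℝ) (hζ : 0 < ζ) :
    Real.logb 2 (∑' k : ℕ, ((k : ℝ) + 1) ^ ζ * (1 - p x) ^ k * p x) ≥
      -ζ * Real.logb 2 (p x) - Real.logb 2 (Real.exp 2 * (2 : ℝ) ^ ζ) := by
  set q : ℝ := p x with hq
  have hq0 : 0 < q := hx0
  have hq2 : q ≤ 1 / 2 := hx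
  set r : ℝ := 1 - q with hrdef
  have hr0 : (0:ℝ) < r := by simp only [hrdef]; linarith
  have hr1 : r < 1 := by simp only [hrdef]; linarith
  set f : ℕ → ℝ := fun k => ((k : ℝ) + 1) ^ ζ * r ^ k * q with hfdef
  have hfnn : ∀ k, 0 ≤ f k := by
    intro k
    have h1 : (0:ℝ) ≤ ((k:ℝ)+1) ^ ζ := Real.rpow_nonneg (by positivity) _
    have h2 : (0:ℝ) ≤ r ^ k := by positivity
    exact mul_nonneg (mul_nonneg h1 h2) hq0.le
  -- summability
  set N : ℕ := ⌈ζ⌉₊ with hN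
  have hg : Summable (fun k : ℕ => (k:ℝ) ^ N * r ^ k) :=
    summable_pow_mul_geometric_of_norm_lt_one N
      (by rw [Real.norm_eq_abs, abs_of_nonneg hr0.le]; exact hr1)
  have hg' : Summable (fun k : ℕ => ((k:ℝ) + 1) ^ N * r ^ (k + 1)) := by
    refine (hg.comp_injective Nat.succ_injective).congr fun k => ?_
    simp only [Function.comp, Nat.succ_eq_add_one]
    push_cast
    ring
  have hf : Summable f := by
    refine Summable.of_nonneg_of_le hfnn (fun k => ?_) (hg'.mul_left (q / r))
    have h1 : ((k:ℝ)+1) ^ ζ ≤ ((k:ℝ)+1) ^ N := by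
      rw [← Real.rpow_natCast ((k:ℝ)+1) N]
      have hk : (0:ℝ) ≤ (k:ℝ) := Nat.cast_nonneg k
      exact Real.rpow_le_rpow_of_exponent_le (by linarith) (Nat.le_ceil ζ)
    have heq : q / r * (((k:ℝ) + 1) ^ N * r ^ (k + 1)) = ((k:ℝ)+1) ^ N * r ^ k * q := by
      field_simp
      ring
    rw [heq]
    have hrk : (0:ℝ) ≤ r ^ k * q := mul_nonneg (by positivity) hq0.le
    calc f k = ((k:ℝ)+1) ^ ζ * (r ^ k * q) := by rw [hfdef]; ring
      _ ≤ ((k:ℝ)+1) ^ N * (r ^ k * q) := mul_le_mul_of_nonneg_right h1 hrk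
      _ = ((k:ℝ)+1) ^ N * r ^ k * q := by ring
  -- the index n and m
  set n : ℕ := ⌈1 / (2 * q)⌉₊ with hn
  have h2q : 0 < 1 / (2 * q) := by positivity
  have hn1 : 1 ≤ n := Nat.one_le_ceil_iff.mpr h2q
  have hnge : 1 / (2 * q) ≤ (n : ℝ) := Nat.le_ceil _
  set m : ℕ := n - 1 with hm
  have hmn : (m : ℝ) = (n : ℝ) - 1 := by
    rw [hm, Nat.cast_sub hn1]; simp
  have hmle : (m : ℝ) ≤ 1 / (2 * q) := by
    have := Nat.ceil_lt_add_one h2q.le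
    rw [hmn]; rw [hn] at *; linarith
  -- key: exp(-(2q)) ≤ 1 - q
  have hkey : Real.exp (-(2 * q)) ≤ r := by
    have he : 1 + 2 * q ≤ Real.exp (2 * q) := by
      have := Real.add_one_le_exp (2 * q); linarith
    have he0 : (0:ℝ) < Real.exp (2 * q) := Real.exp_pos _
    rw [Real.exp_neg, inv_le_iff_one_le_mul₀ he0]
    nlinarith
  -- lower bound on r ^ m
  have hrm : Real.exp (-1) ≤ r ^ m := by
    calc Real.exp (-1) ≤ Real.exp ((m : ℝ) * (-(2 * q))) := by
          apply Real.exp_le_exp.mpr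
          have h2q0 : (0:ℝ) < 2 * q := by linarith
          have : (m : ℝ) * (2 * q) ≤ 1 := by
            calc (m : ℝ) * (2 * q) ≤ (1 / (2 * q)) * (2 * q) :=
                  mul_le_mul_of_nonneg_right hmle h2q0.le
              _ = 1 := by field_simp
          nlinarith
      _ = Real.exp (-(2 * q)) ^ m := by rw [← Real.exp_nat_mul]
      _ ≤ r ^ m := pow_le_pow_left₀ (Real.exp_pos _).le hkey m
  -- tail lower bound: tsum f ≥ n^ζ * r^m
  have htail : (n : ℝ) ^ ζ * r ^ m ≤ ∑' k, f k := by
    have hsplit := Summable.sum_add_tsum_nat_add m hf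
    have hfin : 0 ≤ ∑ i ∈ Finset.range m, f i := Finset.sum_nonneg fun i _ => hfnn i
    have hgeo : Summable (fun i : ℕ => (n : ℝ) ^ ζ * r ^ m * q * r ^ i) :=
      (summable_geometric_of_lt_one hr0.le hr1).mul_left _
    have hle : ∀ i, (n : ℝ) ^ ζ * r ^ m * q * r ^ i ≤ f (i + m) := by
      intro i
      have hbase : (n:ℝ) ≤ (i:ℝ) + (m:ℝ) + 1 := by
        have : (0:ℝ) ≤ (i:ℝ) := Nat.cast_nonneg i
        rw [hmn] at *; linarith
      have h1 : (n:ℝ)^ζ ≤ ((i:ℝ)+(m:ℝ)+1)^ζ :=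
        Real.rpow_le_rpow (Nat.cast_nonneg n) hbase hζ.le
      calc (n:ℝ)^ζ * r^m * q * r^i = (n:ℝ)^ζ * (r^m * r^i * q) := by ring
        _ ≤ ((i:ℝ)+(m:ℝ)+1)^ζ * (r^m * r^i * q) :=
            mul_le_mul_of_nonneg_right h1 (by positivity)
        _ = f (i + m) := by simp only [hfdef]; push_cast; rw [pow_add]; ring
    have htail2 : (n : ℝ) ^ ζ * r ^ m ≤ ∑' i, f (i + m) := by
      have hsum2 : Summable (fun i : ℕ => f (i + m)) := (summable_nat_add_iff m).mpr hf
      calc (n:ℝ)^ζ * r^m = (n:ℝ)^ζ * r^m * q * (1 - r)⁻¹ := by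
            rw [hrdef, sub_sub_cancel]; field_simp
        _ = ∑' i : ℕ, (n:ℝ)^ζ * r^m * q * r^i := by
            rw [tsum_mul_left, tsum_geometric_of_lt_one hr0.le hr1]
        _ ≤ ∑' i, f (i + m) := Summable.tsum_le_tsum hle hgeo hsum2
    linarith
  -- combine: tsum f ≥ q^(-ζ)/(e² 2^ζ)
  have hA : (2*q) ^ (-ζ) ≤ (n:ℝ) ^ ζ := by
    have h2q0 : (0:ℝ) < 2 * q := by linarith
    have : (2*q)^(-ζ) = (1/(2*q))^ζ := by
      rw [one_div, Real.rpow_neg h2q0.le, Real.inv_rpow h2q0.le]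
    rw [this]
    exact Real.rpow_le_rpow h2q.le hnge hζ.le
  have hE : q ^ (-ζ) / (Real.exp 2 * (2:ℝ)^ζ) ≤ ∑' k, f k := by
    have h1 : q^(-ζ)/(Real.exp 2 * (2:ℝ)^ζ) = (2*q)^(-ζ) * Real.exp (-2) := by
      rw [Real.mul_rpow (by norm_num : (0:ℝ) ≤ 2) hq0.le, Real.exp_neg]
      rw [Real.rpow_neg (by norm_num : (0:ℝ) ≤ 2), Real.rpow_neg hq0.le]
      have h2 : ((2:ℝ)^ζ) ≠ 0 := ne_of_gt (Real.rpow_pos_of_pos two_pos ζ)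
      field_simp
    rw [h1]
    have h2 : Real.exp (-2) ≤ Real.exp (-1) := Real.exp_le_exp.mpr (by norm_num)
    have h3 : (0:ℝ) ≤ (2*q)^(-ζ) := Real.rpow_nonneg (by linarith) _
    have h4 : (0:ℝ) ≤ (n:ℝ)^ζ := Real.rpow_nonneg (Nat.cast_nonneg n) _
    calc (2*q)^(-ζ) * Real.exp (-2) ≤ (n:ℝ)^ζ * Real.exp (-1) := by
          apply mul_le_mul hA h2 (Real.exp_pos _).le h4
      _ ≤ (n:ℝ)^ζ * r^m := mul_le_mul_of_nonneg_left hrm h4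
      _ ≤ ∑' k, f k := htail
  -- take logs
  have hdpos : (0:ℝ) < Real.exp 2 * (2:ℝ)^ζ :=
    mul_pos (Real.exp_pos _) (Real.rpow_pos_of_pos two_pos ζ)
  have hpos : (0:ℝ) < q ^ (-ζ) / (Real.exp 2 * (2:ℝ)^ζ) :=
    div_pos (Real.rpow_pos_of_pos hq0 _) hdpos
  have hmono : Real.logb 2 (q ^ (-ζ) / (Real.exp 2 * (2:ℝ)^ζ)) ≤
      Real.logb 2 (∑' k, f k) :=
    Real.logb_le_logb_of_le one_lt_two hpos hE
  have hcomp : Real.logb 2 (q ^ (-ζ) / (Real.exp 2 * (2:ℝ)^ζ)) =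
      -ζ * Real.logb 2 q - Real.logb 2 (Real.exp 2 * (2:ℝ)^ζ) := by
    rw [Real.logb_div (ne_of_gt (Real.rpow_pos_of_pos hq0 _)) (ne_of_gt hdpos)]
    congr 1
    rw [Real.logb, Real.logb, Real.log_rpow hq0]
    ring
  rw [ge_iff_le, ← hcomp]
  exact hmono
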